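/- arXiv:0901.1948 — 3 statements merged into one kernel-verified Lean document; each statement's English description precedes it below -/
import Mathlib

section
/- Let A be a unital C*-algebra and H a unital Hilbert A-bimodule. Let H_𝒞 denote the closed sub-bimodule of H generated by H^A (the centrally generated part of H). Then there exists a family (ξ_j)_{j∈J} of unit vectors in H^A such that the closed subspaces K_j := closure{a·ξ_j : a ∈ A} are pairwise orthogonal sub-bimodules of H whose closed linear span equals H_𝒞; moreover, the orthogonal complement of H_𝒞 in H contains no nonzero central vector for A. -/
open scoped ComplexOrder ENNReal
open MulOpposite Filter

noncomputable section

/-- A unital Hilbert bimodule over a unital `ℂ`-algebra with involution: a complex Hilbert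
space `H` together with a unital `*`-homomorphism `lmul : A → B(H)` and a unital
`*`-homomorphism `rmul : Aᵐᵒᵖ → B(H)` with commuting ranges. -/
structure HBimod (A : Type*) [Ring A] [StarRing A] [Algebra ℂ A]
    (H : Type*) [NormedAddCommGroup H] [InnerProductSpace ℂ H] [CompleteSpace H] where
  lmul : A →⋆ₐ[ℂ] (H →L[ℂ] H)
  rmul : Aᵐᵒᵖ →⋆ₐ[ℂ] (H →L[ℂ] H)
  commutes : ∀ (a : A) (b : Aᵐᵒᵖ), Commute (lmul a) (rmul b)

namespace HBimod

variable {A : Type*} [Ring A] [StarRing A] [Algebra ℂ A]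
variable {H : Type*} [NormedAddCommGroup H] [InnerProductSpace ℂ H] [CompleteSpace H]
variable {H' : Type*} [NormedAddCommGroup H'] [InnerProductSpace ℂ H'] [CompleteSpace H']

/-- The left action `a · ξ`. -/
def l (M : HBimod A H) (a : A) (ξ : H) : H := M.lmul a ξ

/-- The right action `ξ · a`. -/
def r (M : HBimod A H) (a : A) (ξ : H) : H := M.rmul (op a) ξ

/-- `V_H(Q, β)`, the set of `(Q,β)`-central unit vectors. -/
def V (M : HBimod A H) (Q : Finset A) (β : ℝ) : Set H :=
  {ξ | ‖ξ‖ = 1 ∧ ∀ x ∈ Q, ‖M.l x ξ - M.r x ξ‖ < β}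

/-- `H^B`, the subspace of central vectors for a subset `B ⊆ A`. -/
def central (M : HBimod A H) (B : Set A) : Submodule ℂ H where
  carrier := {ξ | ∀ b ∈ B, M.l b ξ = M.r b ξ}
  add_mem' := by
    intro x y hx hy b hb
    simp only [Set.mem_setOf_eq, l, r] at *
    rw [map_add, map_add, hx b hb, hy b hb]
  zero_mem' := by
    intro b hb
    simp only [l, r, map_zero]
  smul_mem' := by
    intro c x hx b hb
    simp only [Set.mem_setOf_eq, l, r] at *
    rw [map_smul, map_smul, hx b hb]

theorem mem_central {M : HBimod A H} {B : Set A} {ξ : H} :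
    ξ ∈ M.central B ↔ ∀ b ∈ B, M.l b ξ = M.r b ξ := Iff.rfl

theorem isClosed_central (M : HBimod A H) (B : Set A) :
    IsClosed ((M.central B : Submodule ℂ H) : Set H) := by
  have h : ((M.central B : Submodule ℂ H) : Set H)
      = ⋂ b ∈ B, {ξ : H | M.lmul b ξ = M.rmul (op b) ξ} := by
    ext ξ
    simp only [SetLike.mem_coe, mem_central, Set.mem_iInter, Set.mem_setOf_eq, l, r]
  rw [h]
  exact isClosed_biInter fun b _ =>
    isClosed_eq (M.lmul b).continuous (M.rmul (op b)).continuous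

/-- Orthogonal projection onto a closed subspace, as a map `H → H`. -/
def projOn (S : Submodule ℂ H) (hS : IsClosed (S : Set H)) (ξ : H) : H :=
  haveI : CompleteSpace S := hS.completeSpace_coe
  (S.orthogonalProjectionOnto ξ : H)

/-- `P^B_H`, the orthogonal projection onto the space `H^B` of `B`-central vectors. -/
def P (M : HBimod A H) (B : Set A) (ξ : H) : H :=
  projOn (M.central B) (M.isClosed_central B) ξ

/-- `(ξ i)` is an almost central unit net for `A` consisting of vectors of `S`. -/
def IsAlmostCentralNet {ι : Type*} [pre : Preorder ι] (M : HBimod A H) (S : Set H)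
    (ξ : ι → H) : Prop :=
  Nonempty ι ∧ IsDirected ι (· ≤ ·) ∧ (∀ i, ξ i ∈ S ∧ ‖ξ i‖ = 1) ∧
    ∀ a : A, Tendsto (fun i => ‖M.l a (ξ i) - M.r a (ξ i)‖) atTop (nhds 0)

/-- There exists an almost central unit net for `A` consisting of vectors of `S`. -/
def HasAlmostCentralNet (M : HBimod A H) (S : Set H) : Prop :=
  ∃ (ι : Type*) (pre : Preorder ι) (ξ : ι → H), IsAlmostCentralNet (pre := pre) M S ξ

/-- The Kazhdan-type constant `t^A(Q; H, K) ∈ [0,∞]`. -/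
def tConst (M : HBimod A H) (Q : Finset A) (K : Submodule ℂ H) : ℝ≥0∞ :=
  ⨅ ξ ∈ {ξ : H | ξ ∈ Kᗮ ∧ ‖ξ‖ = 1},
    ENNReal.ofReal (Real.sqrt (∑ x ∈ Q, ‖M.l x ξ - M.r x ξ‖ ^ 2))

/-- `K` is a (closed) sub-bimodule of `H`. -/
def IsSubBimod (M : HBimod A H) (K : Submodule ℂ H) : Prop :=
  IsClosed (K : Set H) ∧ (∀ (a : A), ∀ ξ ∈ K, M.l a ξ ∈ K) ∧
    (∀ (a : A), ∀ ξ ∈ K, M.r a ξ ∈ K)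

/-- The closed subspace `closure {a · ξ : a ∈ A}`. -/
def orbitCl (M : HBimod A H) (ξ : H) : Submodule ℂ H :=
  (Submodule.span ℂ {y : H | ∃ a : A, y = M.l a ξ}).topologicalClosure

/-- `H_𝒞`, the smallest closed sub-bimodule of `H` containing `H^A` (the centrally
generated part of `H`). -/
def centGen (M : HBimod A H) : Submodule ℂ H :=
  sInf {K : Submodule ℂ H | IsSubBimod M K ∧ M.central Set.univ ≤ K}

/-- The conjugation action `π(u) ξ = u · ξ · u*` of unitaries on a bimodule. -/
def conj (M : HBimod A H) (u : A) (ξ : H) : H := M.l u (M.r (star u) ξ)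

/-- The subspace of vectors fixed by the conjugation action of all unitaries of `A`. -/
def unitaryFixed (M : HBimod A H) : Submodule ℂ H where
  carrier := {η | ∀ u ∈ unitary A, M.conj u η = η}
  add_mem' := by
    intro x y hx hy u hu
    simp only [Set.mem_setOf_eq, conj, l, r] at *
    rw [map_add, map_add, hx u hu, hy u hu]
  zero_mem' := by
    intro u hu
    simp only [conj, l, r, map_zero]
  smul_mem' := by
    intro c x hx u hu
    simp only [Set.mem_setOf_eq, conj, l, r] at *
    rw [map_smul, map_smul, hx u hu]

theorem mem_unitaryFixed {M : HBimod A H} {η : H} :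
    η ∈ M.unitaryFixed ↔ ∀ u ∈ unitary A, M.conj u η = η := Iff.rfl

theorem isClosed_unitaryFixed (M : HBimod A H) :
    IsClosed ((M.unitaryFixed : Submodule ℂ H) : Set H) := by
  have h : ((M.unitaryFixed : Submodule ℂ H) : Set H)
      = ⋂ u ∈ unitary A, {η : H | M.conj u η = η} := by
    ext η
    simp only [SetLike.mem_coe, mem_unitaryFixed, Set.mem_iInter, Set.mem_setOf_eq]
  rw [h]
  refine isClosed_biInter fun u _ => isClosed_eq ?_ continuous_id
  exact (M.lmul u).continuous.comp (M.rmul (op (star u))).continuous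

theorem isClosed_inf_unitaryFixed (M : HBimod A H) (Hs : Submodule ℂ H)
    (hHs : IsClosed (Hs : Set H)) :
    IsClosed ((Hs ⊓ M.unitaryFixed : Submodule ℂ H) : Set H) := by
  rw [Submodule.coe_inf]
  exact hHs.inter (M.isClosed_unitaryFixed)

end HBimod

/-- The pair `(A, B)` has property (T). -/
def PropertyTPair (A : Type*) [Ring A] [StarRing A] [Algebra ℂ A] (B : Set A) : Prop :=
  ∃ (F : Finset A) (ε : ℝ), 0 < ε ∧
    ∀ (H : Type*) [NormedAddCommGroup H] [InnerProductSpace ℂ H] [CompleteSpace H]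
      (M : HBimod A H), (HBimod.V M F ε).Nonempty → HBimod.central M B ≠ ⊥

/-- The pair `(A, B)` has strong property (T). -/
def StrongPropertyTPair (A : Type*) [Ring A] [StarRing A] [Algebra ℂ A] (B : Set A) : Prop :=
  ∀ α : ℝ, 0 < α → ∃ (Q : Finset A) (β : ℝ), 0 < β ∧
    ∀ (H : Type*) [NormedAddCommGroup H] [InnerProductSpace ℂ H] [CompleteSpace H]
      (M : HBimod A H), ∀ ξ ∈ HBimod.V M Q β, ‖ξ - HBimod.P M B ξ‖ < α

/-- The pair `(A, B)` is co-rigid. -/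
def CoRigid (A : Type*) [Ring A] [StarRing A] [Algebra ℂ A] (B : Set A) : Prop :=
  ∃ (Q : Finset A) (β : ℝ), 0 < β ∧
    ∀ (H : Type*) [NormedAddCommGroup H] [InnerProductSpace ℂ H] [CompleteSpace H]
      (M : HBimod A H),
      (HBimod.V M Q β ∩ (HBimod.central M B : Set H)).Nonempty →
        HBimod.central M Set.univ ≠ ⊥

/-- The pair `(A, B)` is strongly co-rigid. -/
def StronglyCoRigid (A : Type*) [Ring A] [StarRing A] [Algebra ℂ A] (B : Set A) : Prop :=
  ∀ γ : ℝ, 0 < γ → ∃ (Q : Finset A) (δ : ℝ), 0 < δ ∧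
    ∀ (H : Type*) [NormedAddCommGroup H] [InnerProductSpace ℂ H] [CompleteSpace H]
      (M : HBimod A H),
      ∀ ξ ∈ HBimod.V M Q δ ∩ (HBimod.central M B : Set H),
        ‖ξ - HBimod.P M Set.univ ξ‖ < γ

/-- An isometric embedding of Hilbert `A`-bimodules. -/
structure HBimodIsometry {A : Type*} [Ring A] [StarRing A] [Algebra ℂ A]
    {H : Type*} [NormedAddCommGroup H] [InnerProductSpace ℂ H] [CompleteSpace H]
    {H' : Type*} [NormedAddCommGroup H'] [InnerProductSpace ℂ H'] [CompleteSpace H']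
    (M : HBimod A H) (N : HBimod A H') where
  toIsometry : H →ₗᵢ[ℂ] H'
  map_l : ∀ (a : A) (ξ : H), toIsometry (HBimod.l M a ξ) = HBimod.l N a (toIsometry ξ)
  map_r : ∀ (a : A) (ξ : H), toIsometry (HBimod.r M a ξ) = HBimod.r N a (toIsometry ξ)

end

universe uH uA

section Aux

variable {A : Type uA} [CStarAlgebra A]
variable {H : Type uH} [NormedAddCommGroup H] [InnerProductSpace ℂ H] [CompleteSpace H]
variable (M : HBimod A H)

lemma aux_inner_l (a : A) (ξ η : H) :
    (inner ℂ (M.l a ξ) η : ℂ) = inner ℂ ξ (M.l (star a) η) := by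
  have h : M.lmul (star a) = ContinuousLinearMap.adjoint (M.lmul a) := by
    rw [map_star, ContinuousLinearMap.star_eq_adjoint]
  show (inner ℂ (M.lmul a ξ) η : ℂ) = inner ℂ ξ (M.lmul (star a) η)
  rw [h, ContinuousLinearMap.adjoint_inner_right]

lemma aux_l_l (a b : A) (ξ : H) : M.l a (M.l b ξ) = M.l (a * b) ξ := by
  show M.lmul a (M.lmul b ξ) = M.lmul (a * b) ξ
  rw [map_mul]; rfl

lemma aux_l_r (a b : A) (ξ : H) : M.l a (M.r b ξ) = M.r b (M.l a ξ) := by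
  have := (M.commutes a (MulOpposite.op b)).eq
  show (M.lmul a * M.rmul (MulOpposite.op b)) ξ = (M.rmul (MulOpposite.op b) * M.lmul a) ξ
  rw [this]

lemma aux_central_r {ξ : H} (hξ : ξ ∈ M.central Set.univ) (a : A) :
    M.r a ξ = M.l a ξ := (hξ a (Set.mem_univ a)).symm

lemma aux_l_one (ξ : H) : M.l 1 ξ = ξ := by
  show M.lmul 1 ξ = ξ
  rw [map_one]; rfl

lemma aux_l_mem_orbitCl (a : A) (ξ : H) : M.l a ξ ∈ M.orbitCl ξ :=
  Submodule.le_topologicalClosure _ (Submodule.subset_span ⟨a, rfl⟩)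

lemma aux_mem_orbitCl_self (ξ : H) : ξ ∈ M.orbitCl ξ := by
  have := aux_l_mem_orbitCl M 1 ξ
  rwa [aux_l_one] at this

lemma aux_isSubBimod_orbitCl {ξ : H} (hξ : ξ ∈ M.central Set.univ) :
    M.IsSubBimod (M.orbitCl ξ) := by
  set S0 : Set H := {y : H | ∃ a : A, y = M.l a ξ} with hS0
  set W : Submodule ℂ H := Submodule.span ℂ S0 with hW
  have hmapl : ∀ b : A, Set.MapsTo (M.l b) (W : Set H) (W : Set H) := by
    intro b
    have : W.map (M.lmul b : H →ₗ[ℂ] H) ≤ W := by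
      rw [hW, Submodule.map_span, Submodule.span_le]
      rintro y ⟨z, ⟨a, rfl⟩, rfl⟩
      exact Submodule.subset_span ⟨b * a, aux_l_l M b a ξ⟩
    intro x hx
    exact this ⟨x, hx, rfl⟩
  have hmapr : ∀ b : A, Set.MapsTo (M.r b) (W : Set H) (W : Set H) := by
    intro b
    have : W.map (M.rmul (MulOpposite.op b) : H →ₗ[ℂ] H) ≤ W := by
      rw [hW, Submodule.map_span, Submodule.span_le]
      rintro y ⟨z, ⟨a, rfl⟩, rfl⟩
      refine Submodule.subset_span ⟨a * b, ?_⟩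
      show M.r b (M.l a ξ) = M.l (a * b) ξ
      rw [← aux_l_r, aux_central_r M hξ, aux_l_l]
    intro x hx
    exact this ⟨x, hx, rfl⟩
  refine ⟨Submodule.isClosed_topologicalClosure _, ?_, ?_⟩
  · intro b x hx
    have hx' : x ∈ closure (W : Set H) := by
      rwa [← Submodule.topologicalClosure_coe]
    have : M.l b x ∈ closure (W : Set H) :=
      map_mem_closure (M.lmul b).continuous hx' (hmapl b)
    rwa [← Submodule.topologicalClosure_coe] at this
  · intro b x hx
    have hx' : x ∈ closure (W : Set H) := by
      rwa [← Submodule.topologicalClosure_coe]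
    have : M.r b x ∈ closure (W : Set H) :=
      map_mem_closure (M.rmul (MulOpposite.op b)).continuous hx' (hmapr b)
    rwa [← Submodule.topologicalClosure_coe] at this

lemma aux_orbitCl_ortho {ξ η : H} (h : ∀ a : A, (inner ℂ (M.l a ξ) η : ℂ) = 0) :
    ∀ x ∈ M.orbitCl ξ, ∀ y ∈ M.orbitCl η, (inner ℂ x y : ℂ) = 0 := by
  have hspan : Submodule.span ℂ {y : H | ∃ a : A, y = M.l a ξ}
      ⟂ Submodule.span ℂ {y : H | ∃ a : A, y = M.l a η} := by
    rw [Submodule.isOrtho_span]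
    rintro u ⟨a, rfl⟩ v ⟨b, rfl⟩
    rw [show (b:A) = star (star b) from (star_star b).symm, ← aux_inner_l, aux_l_l]
    exact h _
  have h1 : M.orbitCl ξ ⟂ Submodule.span ℂ {y : H | ∃ a : A, y = M.l a η} :=
    Submodule.topologicalClosure_minimal _ hspan (Submodule.isClosed_orthogonal _)
  have h2 : M.orbitCl η ⟂ M.orbitCl ξ :=
    Submodule.topologicalClosure_minimal _ h1.symm (Submodule.isClosed_orthogonal _)
  intro x hx y hy
  exact ((M.orbitCl ξ).mem_orthogonal y).mp (h2 hy) x hx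

lemma aux_inner_l' (a : A) (ξ η : H) :
    (inner ℂ ξ (M.l a η) : ℂ) = inner ℂ (M.l (star a) ξ) η := by
  rw [aux_inner_l, star_star]

lemma aux_inner_r (a : A) (ξ η : H) :
    (inner ℂ (M.r a ξ) η : ℂ) = inner ℂ ξ (M.r (star a) η) := by
  have h : M.rmul (MulOpposite.op (star a)) =
      ContinuousLinearMap.adjoint (M.rmul (MulOpposite.op a)) := by
    rw [← ContinuousLinearMap.star_eq_adjoint, ← map_star]
    rfl
  show (inner ℂ (M.rmul (MulOpposite.op a) ξ) η : ℂ) = inner ℂ ξ (M.rmul (MulOpposite.op (star a)) η)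
  rw [h, ContinuousLinearMap.adjoint_inner_right]

lemma aux_inner_r' (a : A) (ξ η : H) :
    (inner ℂ ξ (M.r a η) : ℂ) = inner ℂ (M.r (star a) ξ) η := by
  rw [aux_inner_r, star_star]

lemma aux_central_le_centGen : M.central Set.univ ≤ M.centGen :=
  le_sInf fun _ hK => hK.2

lemma aux_orthogonal_subBimod {K : Submodule ℂ H} (hK : M.IsSubBimod K) :
    (∀ (b : A), ∀ ζ ∈ Kᗮ, M.l b ζ ∈ Kᗮ) ∧ (∀ (b : A), ∀ ζ ∈ Kᗮ, M.r b ζ ∈ Kᗮ) := by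
  constructor
  · intro b ζ hζ
    rw [Submodule.mem_orthogonal]
    intro u hu
    rw [aux_inner_l']
    exact ((Submodule.mem_orthogonal K ζ).mp hζ) _ (hK.2.1 (star b) u hu)
  · intro b ζ hζ
    rw [Submodule.mem_orthogonal]
    intro u hu
    rw [aux_inner_r']
    exact ((Submodule.mem_orthogonal K ζ).mp hζ) _ (hK.2.2 (star b) u hu)

end Aux

/-! STATEMENT 4: decomposition of the centrally generated part `H_𝒞`. -/
theorem centrally_generated_part_decomposition (A : Type uA) [CStarAlgebra A]
    (H : Type uH) [NormedAddCommGroup H] [InnerProductSpace ℂ H] [CompleteSpace H]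
    (M : HBimod A H) :
    (∃ (J : Type uH) (ξv : J → H),
      (∀ j, ξv j ∈ HBimod.central M Set.univ) ∧ (∀ j, ‖ξv j‖ = 1) ∧
      (∀ j, HBimod.IsSubBimod M (HBimod.orbitCl M (ξv j))) ∧
      (∀ i j, i ≠ j → ∀ x ∈ HBimod.orbitCl M (ξv i), ∀ y ∈ HBimod.orbitCl M (ξv j),
        (inner ℂ x y : ℂ) = 0) ∧
      (⨆ j, HBimod.orbitCl M (ξv j)).topologicalClosure = HBimod.centGen M) ∧
    (∀ η ∈ (HBimod.centGen M)ᗮ, η ∈ HBimod.central M Set.univ → η = 0) := by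
  classical
  constructor
  · -- the decomposition
    set 𝒮 : Set (Set H) := {S | (∀ ξ ∈ S, ξ ∈ M.central Set.univ ∧ ‖ξ‖ = 1) ∧
        ∀ ξ ∈ S, ∀ η ∈ S, ξ ≠ η → ∀ a : A, (inner ℂ (M.l a ξ) η : ℂ) = 0} with h𝒮
    obtain ⟨S, hSmax⟩ := zorn_subset 𝒮 (by
      intro c hc hchain
      refine ⟨⋃₀ c, ⟨?_, ?_⟩, fun s hs => Set.subset_sUnion_of_mem hs⟩
      · rintro ξ ⟨s, hs, hξ⟩
        exact (hc hs).1 ξ hξ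
      · rintro ξ ⟨s, hs, hξ⟩ η ⟨t, ht, hη⟩ hne a
        rcases hchain.total hs ht with h | h
        · exact (hc ht).2 ξ (h hξ) η hη hne a
        · exact (hc hs).2 ξ hξ η (h hη) hne a)
    have hS𝒮 : S ∈ 𝒮 := hSmax.1
    have hS1 : ∀ ξ ∈ S, ξ ∈ M.central Set.univ ∧ ‖ξ‖ = 1 := hS𝒮.1
    have hS2 : ∀ ξ ∈ S, ∀ η ∈ S, ξ ≠ η → ∀ a : A, (inner ℂ (M.l a ξ) η : ℂ) = 0 := hS𝒮.2
    refine ⟨S, fun j => (j : H), fun j => (hS1 j j.2).1, fun j => (hS1 j j.2).2,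
      fun j => aux_isSubBimod_orbitCl M (hS1 j j.2).1, ?_, ?_⟩
    · intro i j hij
      exact aux_orbitCl_ortho M
        (hS2 i i.2 j j.2 (fun h => hij (Subtype.ext h)))
    -- the supremum equals centGen
    set W : Submodule ℂ H := ⨆ j : S, M.orbitCl (j : H) with hWdef
    set K : Submodule ℂ H := W.topologicalClosure with hKdef
    have hKclosed : IsClosed (K : Set H) := Submodule.isClosed_topologicalClosure _
    have horbK : ∀ j : S, M.orbitCl (j : H) ≤ K :=
      fun j => le_trans (le_iSup (fun j : S => M.orbitCl (j : H)) j)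
        (Submodule.le_topologicalClosure W)
    have hSK : ∀ ξ ∈ S, ξ ∈ K := fun ξ hξ =>
      horbK ⟨ξ, hξ⟩ (aux_mem_orbitCl_self M ξ)
    -- K is a sub-bimodule
    have hKsub : M.IsSubBimod K := by
      refine ⟨hKclosed, ?_, ?_⟩
      · intro b x hx
        have hmaps : Set.MapsTo (M.l b) (W : Set H) (W : Set H) := by
          intro y hy
          rw [SetLike.mem_coe, hWdef] at hy ⊢
          refine Submodule.iSup_induction (motive := fun y => M.l b y ∈ ⨆ j : S, M.orbitCl (j : H))
            _ hy (fun j z hz => le_iSup (fun j : S => M.orbitCl (j : H)) j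
              ((aux_isSubBimod_orbitCl M (hS1 j j.2).1).2.1 b z hz)) ?_ ?_
          · show M.lmul b 0 ∈ _
            rw [map_zero]; exact Submodule.zero_mem _
          · intro u v hu hv
            show M.lmul b (u + v) ∈ _
            rw [map_add]; exact Submodule.add_mem _ hu hv
        have hx' : x ∈ closure (W : Set H) := by
          rwa [← Submodule.topologicalClosure_coe]
        have := map_mem_closure (M.lmul b).continuous hx' hmaps
        rwa [← Submodule.topologicalClosure_coe] at this
      · intro b x hx
        have hmaps : Set.MapsTo (M.r b) (W : Set H) (W : Set H) := by
          intro y hy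
          rw [SetLike.mem_coe, hWdef] at hy ⊢
          refine Submodule.iSup_induction (motive := fun y => M.r b y ∈ ⨆ j : S, M.orbitCl (j : H))
            _ hy (fun j z hz => le_iSup (fun j : S => M.orbitCl (j : H)) j
              ((aux_isSubBimod_orbitCl M (hS1 j j.2).1).2.2 b z hz)) ?_ ?_
          · show M.rmul (MulOpposite.op b) 0 ∈ _
            rw [map_zero]; exact Submodule.zero_mem _
          · intro u v hu hv
            show M.rmul (MulOpposite.op b) (u + v) ∈ _
            rw [map_add]; exact Submodule.add_mem _ hu hv
        have hx' : x ∈ closure (W : Set H) := by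
          rwa [← Submodule.topologicalClosure_coe]
        have := map_mem_closure (M.rmul (MulOpposite.op b)).continuous hx' hmaps
        rwa [← Submodule.topologicalClosure_coe] at this
    -- central vectors lie in K
    have hcentK : M.central Set.univ ≤ K := by
      intro η hη
      haveI : CompleteSpace K := hKclosed.completeSpace_coe
      set η₀ : H := (K.orthogonalProjectionOnto η : H) with hη₀
      have hη₀K : η₀ ∈ K := (K.orthogonalProjectionOnto η).2
      set η' : H := η - η₀ with hη'def
      have hη'perp : η' ∈ Kᗮ := Submodule.sub_starProjection_mem_orthogonal (K := K) η
      -- η' is central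
      have hη'cent : η' ∈ M.central Set.univ := by
        intro b _
        have hv : M.l b η₀ - M.r b η₀ ∈ K :=
          Submodule.sub_mem _ (hKsub.2.1 b η₀ hη₀K) (hKsub.2.2 b η₀ hη₀K)
        have hw : M.l b η' - M.r b η' ∈ Kᗮ :=
          Submodule.sub_mem _ ((aux_orthogonal_subBimod M hKsub).1 b η' hη'perp)
            ((aux_orthogonal_subBimod M hKsub).2 b η' hη'perp)
        have hsum : (M.l b η₀ - M.r b η₀) + (M.l b η' - M.r b η') = 0 := by
          have h1 : M.l b η = M.r b η := hη b (Set.mem_univ b)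
          have h2 : M.l b η = M.l b η₀ + M.l b η' := by
            show M.lmul b η = M.lmul b η₀ + M.lmul b η'
            rw [← map_add, hη'def]; congr 1; abel
          have h3 : M.r b η = M.r b η₀ + M.r b η' := by
            show M.rmul (MulOpposite.op b) η
              = M.rmul (MulOpposite.op b) η₀ + M.rmul (MulOpposite.op b) η'
            rw [← map_add, hη'def]; congr 1; abel
          rw [h2, h3] at h1
          rw [sub_add_sub_comm, h1, sub_self]
        have hw' : M.l b η' - M.r b η' ∈ K := by
          have : M.l b η' - M.r b η' = -(M.l b η₀ - M.r b η₀) := by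
            rw [eq_neg_iff_add_eq_zero, add_comm]; exact hsum
          rw [this]; exact Submodule.neg_mem _ hv
        have : M.l b η' - M.r b η' = 0 := by
          rw [← inner_self_eq_zero (𝕜 := ℂ)]
          exact (Submodule.mem_orthogonal K _).mp hw _ hw'
        exact sub_eq_zero.mp this
      -- η' must be zero by maximality
      by_contra hηK
      have hη'ne : η' ≠ 0 := by
        intro h0
        apply hηK
        have : η = η₀ := by rw [hη'def, sub_eq_zero] at h0; exact h0
        rw [this]; exact hη₀K
      set ζ : H := ‖η'‖⁻¹ • η' with hζdef
      have hζnorm : ‖ζ‖ = 1 := norm_smul_inv_norm hη'ne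
      have hζcent : ζ ∈ M.central Set.univ := Submodule.smul_mem _ _ hη'cent
      have hζperp : ζ ∈ Kᗮ := Submodule.smul_mem _ _ hη'perp
      have hζnotS : ζ ∉ S := by
        intro hζS
        have : (inner ℂ ζ ζ : ℂ) = 0 :=
          (Submodule.mem_orthogonal K ζ).mp hζperp ζ (hSK ζ hζS)
        rw [inner_self_eq_zero] at this
        rw [this, norm_zero] at hζnorm
        norm_num at hζnorm
      have hnew : S ∪ {ζ} ∈ 𝒮 := by
        constructor
        · rintro ξ (hξ | rfl)
          · exact hS1 ξ hξ
          · exact ⟨hζcent, hζnorm⟩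
        · rintro ξ (hξ | rfl) χ (hχ | rfl) hne a
          · exact hS2 ξ hξ χ hχ hne a
          · exact (Submodule.mem_orthogonal K ζ).mp hζperp _
              (hKsub.2.1 a ξ (hSK ξ hξ))
          · rw [aux_inner_l]
            exact (Submodule.mem_orthogonal' K ζ).mp hζperp _
              (hKsub.2.1 (star a) χ (hSK χ hχ))
          · exact absurd rfl hne
      have : S ∪ {ζ} ⊆ S := hSmax.2 hnew Set.subset_union_left
      exact hζnotS (this (Set.mem_union_right S rfl))
    -- conclude equality
    refine le_antisymm ?_ (sInf_le ⟨hKsub, hcentK⟩)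
    refine le_sInf ?_
    rintro K' ⟨hK'sub, hK'cent⟩
    refine Submodule.topologicalClosure_minimal _ (iSup_le fun j => ?_) hK'sub.1
    refine Submodule.topologicalClosure_minimal _ ?_ hK'sub.1
    rw [Submodule.span_le]
    rintro y ⟨a, rfl⟩
    exact hK'sub.2.1 a _ (hK'cent (hS1 j j.2).1)
  · -- orthogonal complement contains no central vector
    intro η hηperp hηcent
    have hηK : η ∈ M.centGen := aux_central_le_centGen M hηcent
    have : (inner ℂ η η : ℂ) = 0 :=
      (Submodule.mem_orthogonal _ η).mp hηperp η hηK
    rwa [inner_self_eq_zero] at this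
end

section
/- Let A be a unital C*-algebra. If A has no tracial state, then A has strong property (T). -/
open scoped ComplexOrder ENNReal
open MulOpposite Filter

section TraceConstruction

variable {A : Type*} [CStarAlgebra A]
variable {H : Type*} [NormedAddCommGroup H] [InnerProductSpace ℂ H] [CompleteSpace H]

local notation "⟪" x ", " y "⟫" => @inner ℂ _ _ x y

private lemma HBimod.lmul_apply_norm_le (M : HBimod A H) (a : A) (ξ : H) :
    ‖M.lmul a ξ‖ ≤ ‖a‖ * ‖ξ‖ :=
  ((M.lmul a).le_opNorm ξ).trans
    (mul_le_mul_of_nonneg_right (NonUnitalStarAlgHom.norm_apply_le M.lmul a) (norm_nonneg ξ))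

private lemma HBimod.rmul_adjoint (M : HBimod A H) (b : A) :
    M.rmul (op (star b)) = ContinuousLinearMap.adjoint (M.rmul (op b)) := by
  rw [← ContinuousLinearMap.star_eq_adjoint, ← map_star, MulOpposite.op_star]

private lemma HBimod.lmul_adjoint (M : HBimod A H) (b : A) :
    M.lmul (star b) = ContinuousLinearMap.adjoint (M.lmul b) := by
  rw [← ContinuousLinearMap.star_eq_adjoint, ← map_star]

private lemma HBimod.key_est (M : HBimod A H) (η : H) (a b : A) :
    ‖⟪η, M.lmul (a * b) η⟫ - ⟪η, M.lmul (b * a) η⟫‖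
      ≤ ‖a‖ * ‖η‖ *
        (‖HBimod.l M b η - HBimod.r M b η‖
          + ‖HBimod.l M (star b) η - HBimod.r M (star b) η‖) := by
  have hcomm : M.lmul a (M.rmul (op b) η) = M.rmul (op b) (M.lmul a η) := by
    have h := congrArg (fun T : H →L[ℂ] H => T η) (M.commutes a (op b)).eq
    simpa [ContinuousLinearMap.mul_apply] using h
  have hab : M.lmul (a * b) η = M.lmul a (M.lmul b η) := by
    rw [map_mul, ContinuousLinearMap.mul_apply]
  have hba : M.lmul (b * a) η = M.lmul b (M.lmul a η) := by
    rw [map_mul, ContinuousLinearMap.mul_apply]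
  have hadj1 : ⟪η, M.rmul (op b) (M.lmul a η)⟫ = ⟪M.rmul (op (star b)) η, M.lmul a η⟫ := by
    rw [HBimod.rmul_adjoint, ContinuousLinearMap.adjoint_inner_left]
  have hadj2 : ⟪M.lmul (star b) η, M.lmul a η⟫ = ⟪η, M.lmul b (M.lmul a η)⟫ := by
    rw [HBimod.lmul_adjoint, ContinuousLinearMap.adjoint_inner_left]
  have hsplit : ⟪η, M.lmul (a * b) η⟫ - ⟪η, M.lmul (b * a) η⟫
      = ⟪η, M.lmul a (M.lmul b η - M.rmul (op b) η)⟫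
        + ⟪M.rmul (op (star b)) η - M.lmul (star b) η, M.lmul a η⟫ := by
    rw [hab, hba, map_sub, inner_sub_right, inner_sub_left, hadj2, ← hadj1, hcomm]
    ring
  simp only [HBimod.l, HBimod.r]
  rw [hsplit]
  have h1 : ‖⟪η, M.lmul a (M.lmul b η - M.rmul (op b) η)⟫‖
      ≤ ‖η‖ * (‖a‖ * ‖M.lmul b η - M.rmul (op b) η‖) :=
    (norm_inner_le_norm _ _).trans
      (mul_le_mul_of_nonneg_left (HBimod.lmul_apply_norm_le M a _) (norm_nonneg η))
  have h2 : ‖⟪M.rmul (op (star b)) η - M.lmul (star b) η, M.lmul a η⟫‖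
      ≤ ‖M.lmul (star b) η - M.rmul (op (star b)) η‖ * (‖a‖ * ‖η‖) := by
    refine (norm_inner_le_norm _ _).trans ?_
    rw [norm_sub_rev]
    exact mul_le_mul_of_nonneg_left (HBimod.lmul_apply_norm_le M a η) (norm_nonneg _)
  exact (norm_add_le _ _).trans ((add_le_add h1 h2).trans (le_of_eq (by ring)))

private lemma HBimod.exists_state (M : HBimod A H) (η : H) (hη : η ≠ 0) :
    ∃ ψ : WeakDual ℂ A, ‖WeakDual.toStrongDual ψ‖ ≤ 1 ∧
      (∀ a : A, 0 ≤ ψ (star a * a)) ∧ ψ 1 = 1 ∧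
      ∀ a b : A, ‖ψ (a * b) - ψ (b * a)‖
        ≤ ‖a‖ * (‖HBimod.l M b η - HBimod.r M b η‖
            + ‖HBimod.l M (star b) η - HBimod.r M (star b) η‖) / ‖η‖ := by
  have hno : (0 : ℝ) < ‖η‖ := norm_pos_iff.mpr hη
  have hcne : ((‖η‖ : ℂ)) ^ 2 ≠ 0 := pow_ne_zero _ (by exact_mod_cast hno.ne')
  set ℓ : A →ₗ[ℂ] ℂ :=
    { toFun := fun a => ⟪η, M.lmul a η⟫ / ((‖η‖ : ℂ)) ^ 2
      map_add' := fun a b => by simp [map_add, inner_add_right, add_div]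
      map_smul' := fun c a => by simp [map_smul, inner_smul_right, mul_div_assoc] } with hℓ
  have hnc : ‖((‖η‖ : ℂ)) ^ 2‖ = ‖η‖ ^ 2 := by rw [norm_pow]; simp
  have hbound : ∀ a : A, ‖ℓ a‖ ≤ 1 * ‖a‖ := by
    intro a
    have h1 : ‖⟪η, M.lmul a η⟫‖ ≤ ‖η‖ * (‖a‖ * ‖η‖) :=
      (norm_inner_le_norm _ _).trans
        (mul_le_mul_of_nonneg_left (HBimod.lmul_apply_norm_le M a η) (norm_nonneg η))
    simp only [hℓ, LinearMap.coe_mk, AddHom.coe_mk, norm_div, hnc]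
    rw [div_le_iff₀ (by positivity)]
    nlinarith [norm_nonneg η, norm_nonneg a]
  set ψ0 : A →L[ℂ] ℂ := LinearMap.mkContinuous ℓ 1 hbound with hψ0
  have happ : ∀ x : A,
      (StrongDual.toWeakDual ψ0) x = ⟪η, M.lmul x η⟫ / ((‖η‖ : ℂ)) ^ 2 := fun x => rfl
  refine ⟨StrongDual.toWeakDual ψ0, ?_, ?_, ?_, ?_⟩
  · show ‖ψ0‖ ≤ 1
    exact LinearMap.mkContinuous_norm_le ℓ zero_le_one hbound
  · intro a
    have hL : M.lmul (star a * a) η = ContinuousLinearMap.adjoint (M.lmul a) (M.lmul a η) := by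
      rw [map_mul, ContinuousLinearMap.mul_apply, HBimod.lmul_adjoint]
    rw [happ, hL, ContinuousLinearMap.adjoint_inner_right, inner_self_eq_norm_sq_to_K]
    show (0 : ℂ) ≤ ((‖M.lmul a η‖ : ℂ)) ^ 2 / ((‖η‖ : ℂ)) ^ 2
    rw [show ((‖M.lmul a η‖ : ℂ)) ^ 2 / ((‖η‖ : ℂ)) ^ 2
        = ((‖M.lmul a η‖ ^ 2 / ‖η‖ ^ 2 : ℝ) : ℂ) by push_cast; ring]
    exact Complex.zero_le_real.mpr (by positivity)
  · rw [happ, map_one, ContinuousLinearMap.one_apply, inner_self_eq_norm_sq_to_K]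
    show ((‖η‖ : ℂ)) ^ 2 / ((‖η‖ : ℂ)) ^ 2 = 1
    exact div_self hcne
  · intro a b
    rw [happ, happ, div_sub_div_same, norm_div, hnc]
    rw [show ‖a‖ * (‖HBimod.l M b η - HBimod.r M b η‖
          + ‖HBimod.l M (star b) η - HBimod.r M (star b) η‖) / ‖η‖
        = ‖a‖ * ‖η‖ * (‖HBimod.l M b η - HBimod.r M b η‖
          + ‖HBimod.l M (star b) η - HBimod.r M (star b) η‖) / ‖η‖ ^ 2 by
      field_simp]
    gcongr
    exact HBimod.key_est M η a b

private lemma HBimod.P_mem (M : HBimod A H) (B : Set A) (ξ : H) :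
    HBimod.P M B ξ ∈ HBimod.central M B := by
  haveI := (M.isClosed_central B).completeSpace_coe
  exact ((M.central B).orthogonalProjectionOnto ξ).2

end TraceConstruction

/-! STATEMENT 15: a unital C*-algebra with no tracial state has strong property (T). -/
theorem strongPropertyT_of_no_tracial_state (A : Type*) [CStarAlgebra A]
    (h : ¬ ∃ τ : A →ₗ[ℂ] ℂ, (∀ a : A, 0 ≤ τ (star a * a)) ∧ τ 1 = 1 ∧
      ∀ a b : A, τ (a * b) = τ (b * a)) :
    StrongPropertyTPair A Set.univ := by
  by_contra hT
  apply h
  simp only [StrongPropertyTPair] at hT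
  push_neg at hT
  obtain ⟨α, hα, hT⟩ := hT
  haveI := Classical.decEq A
  have key : ∀ p : Finset A × ℕ, ∃ ψ : WeakDual ℂ A,
      ‖WeakDual.toStrongDual ψ‖ ≤ 1 ∧ (∀ a : A, 0 ≤ ψ (star a * a)) ∧ ψ 1 = 1 ∧
      ∀ a b : A, b ∈ p.1 → star b ∈ p.1 →
        ‖ψ (a * b) - ψ (b * a)‖ ≤ ‖a‖ * (2 * (1 / ((p.2 : ℝ) + 1))) / α := by
    intro p
    obtain ⟨H, g, i, c, M, ξ, hξV, hξP⟩ := hT p.1 (1 / ((p.2 : ℝ) + 1)) (by positivity)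
    set η := ξ - HBimod.P M Set.univ ξ with hη
    have hηα : α ≤ ‖η‖ := hξP
    have hη0 : η ≠ 0 := by
      intro h0
      rw [h0, norm_zero] at hηα
      linarith
    have hPmem := HBimod.P_mem M Set.univ ξ
    have hδ : ∀ x ∈ p.1, ‖HBimod.l M x η - HBimod.r M x η‖ < 1 / ((p.2 : ℝ) + 1) := by
      intro x hx
      have h2 : HBimod.l M x (HBimod.P M Set.univ ξ) = HBimod.r M x (HBimod.P M Set.univ ξ) :=
        hPmem x (Set.mem_univ x)
      have h1 : HBimod.l M x η - HBimod.r M x η = HBimod.l M x ξ - HBimod.r M x ξ := by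
        simp only [hη, HBimod.l, HBimod.r, map_sub] at h2 ⊢
        rw [h2]
        abel
      rw [h1]
      exact hξV.2 x hx
    obtain ⟨ψ, h1, h2, h3, h4⟩ := HBimod.exists_state M η hη0
    refine ⟨ψ, h1, h2, h3, fun a b hb hsb => (h4 a b).trans ?_⟩
    have hS : ‖HBimod.l M b η - HBimod.r M b η‖
        + ‖HBimod.l M (star b) η - HBimod.r M (star b) η‖ ≤ 2 * (1 / ((p.2 : ℝ) + 1)) := by
      have e1 := hδ b hb
      have e2 := hδ (star b) hsb
      linarith
    have hnum : ‖a‖ * (‖HBimod.l M b η - HBimod.r M b η‖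
        + ‖HBimod.l M (star b) η - HBimod.r M (star b) η‖)
        ≤ ‖a‖ * (2 * (1 / ((p.2 : ℝ) + 1))) :=
      mul_le_mul_of_nonneg_left hS (norm_nonneg a)
    exact div_le_div₀ (by positivity) hnum hα hηα
  choose φ hφ1 hφ2 hφ3 hφ4 using key
  haveI : Nonempty (Finset A × ℕ) := ⟨(∅, 0)⟩
  haveI : (atTop : Filter (Finset A × ℕ)).NeBot := atTop_neBot
  haveI : (Filter.map φ atTop).NeBot := Filter.map_neBot
  have hmem : ∀ p, φ p ∈ WeakDual.toStrongDual ⁻¹' Metric.closedBall 0 1 := by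
    intro p
    simp only [Set.mem_preimage, Metric.mem_closedBall, dist_zero_right]
    exact hφ1 p
  have hFs : Filter.map φ atTop ≤ Filter.principal (WeakDual.toStrongDual ⁻¹' Metric.closedBall 0 1) :=
    le_principal_iff.mpr (Filter.mem_map.mpr (Filter.univ_mem' hmem))
  obtain ⟨τ, -, hclus⟩ :=
    (WeakDual.isCompact_closedBall (𝕜 := ℂ) (E := A) 0 1).exists_clusterPt hFs
  have hval : ∀ (c : ℂ) (g : WeakDual ℂ A → ℂ), ContinuousAt g τ →
      Tendsto (fun p => g (φ p)) atTop (nhds c) → g τ = c := by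
    intro c g hg ht
    exact eq_of_nhds_neBot (hclus.map hg (Filter.tendsto_map'_iff.mpr ht))
  have hone : τ 1 = 1 := by
    refine hval 1 (fun ψ => ψ 1) (WeakDual.eval_continuous (1 : A)).continuousAt ?_
    simp only [hφ3]
    exact tendsto_const_nhds
  have htr : ∀ a b : A, τ (a * b) = τ (b * a) := by
    intro a b
    have h0 : Tendsto (fun p : Finset A × ℕ => φ p (a * b) - φ p (b * a)) atTop (nhds 0) := by
      refine squeeze_zero_norm'
          (a := fun p : Finset A × ℕ => ‖a‖ * (2 * (1 / ((p.2 : ℝ) + 1))) / α) ?_ ?_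
      · filter_upwards [Filter.eventually_ge_atTop (({b, star b} : Finset A), 0)] with p hp
        have hb : b ∈ p.1 := hp.1 (Finset.mem_insert_self b _)
        have hsb : star b ∈ p.1 := hp.1 (by simp)
        exact hφ4 p a b hb hsb
      · have hsnd : Tendsto (fun p : Finset A × ℕ => p.2) atTop atTop := by
          rw [← Filter.prod_atTop_atTop_eq]
          exact tendsto_snd
        have hb : Tendsto (fun n : ℕ => ‖a‖ * (2 * (1 / ((n : ℝ) + 1))) / α) atTop (nhds 0) := by
          have h1 := ((tendsto_one_div_add_atTop_nhds_zero_nat.const_mul 2).const_mul ‖a‖).div_const α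
          simpa using h1
        exact hb.comp hsnd
    have hg : ContinuousAt (fun ψ : WeakDual ℂ A => ψ (a * b) - ψ (b * a)) τ :=
      ((WeakDual.eval_continuous (a * b)).sub (WeakDual.eval_continuous (b * a))).continuousAt
    exact sub_eq_zero.mp (hval 0 _ hg h0)
  have hpos : ∀ a : A, 0 ≤ τ (star a * a) := by
    intro a
    have hcl : IsClosed {z : ℂ | 0 ≤ z} := by
      have hset : {z : ℂ | 0 ≤ z} = Complex.re ⁻¹' Set.Ici 0 ∩ Complex.im ⁻¹' {0} := by
        ext z
        simp [Complex.le_def, eq_comm]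
      rw [hset]
      exact (isClosed_Ici.preimage Complex.continuous_re).inter
        (isClosed_singleton.preimage Complex.continuous_im)
    have hmapcl : ClusterPt (τ (star a * a))
        (Filter.map (fun ψ : WeakDual ℂ A => ψ (star a * a)) (Filter.map φ atTop)) :=
      hclus.map (WeakDual.eval_continuous (star a * a)).continuousAt Filter.tendsto_map
    have hle : Filter.map (fun ψ : WeakDual ℂ A => ψ (star a * a)) (Filter.map φ atTop)
        ≤ Filter.principal {z : ℂ | 0 ≤ z} := by
      rw [Filter.map_map]
      exact le_principal_iff.mpr (Filter.mem_map.mpr (Filter.univ_mem' fun p => hφ2 p a))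
    have hτmem : τ (star a * a) ∈ closure {z : ℂ | 0 ≤ z} :=
      mem_closure_iff_clusterPt.mpr (hmapcl.mono hle)
    rwa [hcl.closure_eq] at hτmem
  exact ⟨{ toFun := fun x => τ x,
           map_add' := fun x y => map_add τ x y,
           map_smul' := fun c x => map_smul τ c x }, hpos, hone, htr⟩
end

section
/- Let A be a unital C*-algebra. If some unital Hilbert A-bimodule H contains an almost central unit net for A, then A admits a tracial state. -/
open scoped ComplexOrder ENNReal
open MulOpposite Filter

/-! STATEMENT 16: an almost central unit net in some bimodule yields a tracial state. -/
open scoped InnerProductSpace in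
theorem exists_tracial_state_of_hasAlmostCentralNet (A : Type*) [CStarAlgebra A]
    (H : Type*) [NormedAddCommGroup H] [InnerProductSpace ℂ H] [CompleteSpace H]
    (M : HBimod A H) (h : HBimod.HasAlmostCentralNet M Set.univ) :
    ∃ τ : A →ₗ[ℂ] ℂ, (∀ a : A, 0 ≤ τ (star a * a)) ∧ τ 1 = 1 ∧
      ∀ a b : A, τ (a * b) = τ (b * a) := by
  classical
  obtain ⟨ι, pre, ξ, hne, hdir, hmem, hcent⟩ := h
  have hxnorm : ∀ i, ‖ξ i‖ = 1 := fun i => (hmem i).2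
  let f0 : ι → A →ₗ[ℂ] ℂ := fun i =>
    { toFun := fun a => ⟪ξ i, M.lmul a (ξ i)⟫_ℂ
      map_add' := fun a b => by simp [inner_add_right]
      map_smul' := fun c a => by simp [inner_smul_right] }
  have hb : ∀ i a, ‖f0 i a‖ ≤ 1 * ‖a‖ := by
    intro i a
    have h1 : ‖(⟪ξ i, M.lmul a (ξ i)⟫_ℂ : ℂ)‖ ≤ ‖ξ i‖ * ‖M.lmul a (ξ i)‖ :=
      norm_inner_le_norm _ _
    have h2 : ‖M.lmul a (ξ i)‖ ≤ ‖M.lmul a‖ * ‖ξ i‖ := (M.lmul a).le_opNorm _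
    have h3 : ‖M.lmul a‖ ≤ ‖a‖ := NonUnitalStarAlgHom.norm_apply_le M.lmul a
    rw [hxnorm i, one_mul, mul_one] at *
    exact h1.trans (h2.trans h3)
  let f : ι → StrongDual ℂ A := fun i => LinearMap.mkContinuous (f0 i) 1 (hb i)
  let φ : ι → WeakDual ℂ A := fun i => StrongDual.toWeakDual (f i)
  have hφ : ∀ i c, φ i c = ⟪ξ i, M.lmul c (ξ i)⟫_ℂ := fun i c => rfl
  have hK : IsCompact (WeakDual.toStrongDual ⁻¹'
      Metric.closedBall (0 : StrongDual ℂ A) 1) := WeakDual.isCompact_closedBall (𝕜 := ℂ) (E := A) 0 1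
  haveI : (atTop : Filter ι).NeBot := Filter.atTop_neBot_iff.mpr ⟨hne, hdir⟩
  have hle : Filter.map φ atTop ≤ Filter.principal
      (WeakDual.toStrongDual ⁻¹' Metric.closedBall (0 : StrongDual ℂ A) 1) := by
    rw [Filter.le_principal_iff, Filter.mem_map]
    refine Filter.univ_mem' fun i => ?_
    simp only [Set.mem_preimage, Metric.mem_closedBall, dist_zero_right]
    exact LinearMap.mkContinuous_norm_le _ zero_le_one (hb i)
  obtain ⟨τw, hτK, hτ⟩ := hK.exists_clusterPt hle
  have key : ∀ S : Set (WeakDual ℂ A), IsClosed S → (∀ i, φ i ∈ S) → τw ∈ S := by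
    intro S hS hall
    have h1 : Filter.map φ atTop ≤ Filter.principal S :=
      Filter.le_principal_iff.mpr (Filter.mem_map.mpr (Filter.univ_mem' hall))
    rw [← hS.closure_eq]
    exact mem_closure_iff_clusterPt.mpr (hτ.mono h1)
  have keyEv : ∀ S : Set (WeakDual ℂ A), IsClosed S → (∀ᶠ i in atTop, φ i ∈ S) → τw ∈ S := by
    intro S hS hev
    have h1 : Filter.map φ atTop ≤ Filter.principal S :=
      Filter.le_principal_iff.mpr (Filter.mem_map.mpr hev)
    rw [← hS.closure_eq]
    exact mem_closure_iff_clusterPt.mpr (hτ.mono h1)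
  refine ⟨(WeakDual.toStrongDual τw : A →L[ℂ] ℂ).toLinearMap, ?_, ?_, ?_⟩
  · intro a
    have hmemS : τw ∈ (fun ψ : WeakDual ℂ A => ψ (star a * a)) ⁻¹' Set.Ici 0 := by
      refine key _ (IsClosed.preimage (WeakDual.eval_continuous _) isClosed_Ici) fun i => ?_
      simp only [Set.mem_preimage, Set.mem_Ici]
      rw [hφ]
      have e : M.lmul (star a * a) (ξ i)
          = (ContinuousLinearMap.adjoint (M.lmul a)) (M.lmul a (ξ i)) := by
        rw [← ContinuousLinearMap.star_eq_adjoint, ← map_star, ← ContinuousLinearMap.mul_apply,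
          ← map_mul]
      rw [e, ContinuousLinearMap.adjoint_inner_right, inner_self_eq_norm_sq_to_K,
        ← RCLike.ofReal_pow]
      exact RCLike.ofReal_nonneg.mpr (sq_nonneg _)
    exact hmemS
  · have hmemS : τw ∈ {ψ : WeakDual ℂ A | ψ 1 = 1} := by
      refine key _ (isClosed_eq (WeakDual.eval_continuous _) continuous_const) fun i => ?_
      show φ i 1 = 1
      rw [hφ, map_one, ContinuousLinearMap.one_apply, inner_self_eq_norm_sq_to_K, hxnorm]
      norm_num
    exact hmemS
  · intro a b
    have main : ∀ ε : ℝ, 0 < ε → ‖τw (a * b) - τw (b * a)‖ ≤ ε := by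
      intro ε hε
      have hS : IsClosed {ψ : WeakDual ℂ A | ‖ψ (a * b) - ψ (b * a)‖ ≤ ε} :=
        isClosed_le
          ((Continuous.sub (WeakDual.eval_continuous _) (WeakDual.eval_continuous _)).norm)
          continuous_const
      refine keyEv _ hS ?_
      have hbound : ∀ i, ‖φ i (a * b) - φ i (b * a)‖ ≤
          ‖M.l (star a) (ξ i) - M.r (star a) (ξ i)‖ * ‖M.lmul b‖
          + ‖M.rmul (op (star a))‖ * ‖M.l b (ξ i) - M.r b (ξ i)‖
          + ‖M.l (b * a) (ξ i) - M.r (b * a) (ξ i)‖ := by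
        intro i
        have hx1 : ‖ξ i‖ = 1 := hxnorm i
        have e1 : φ i (a * b) = ⟪M.lmul (star a) (ξ i), M.lmul b (ξ i)⟫_ℂ := by
          rw [hφ, map_mul, ContinuousLinearMap.mul_apply,
            ← ContinuousLinearMap.adjoint_inner_left, ← ContinuousLinearMap.star_eq_adjoint,
            ← map_star]
        have e2 : ⟪M.rmul (op (star a)) (ξ i), M.rmul (op b) (ξ i)⟫_ℂ
            = ⟪ξ i, M.rmul (op (b * a)) (ξ i)⟫_ℂ := by
          rw [← ContinuousLinearMap.adjoint_inner_right]
          congr 1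
          rw [← ContinuousLinearMap.star_eq_adjoint, ← map_star]
          have hst : (star (op (star a)) : Aᵐᵒᵖ) = op a := by simp
          rw [hst, ← ContinuousLinearMap.mul_apply, ← map_mul, ← op_mul]
        have e4 : φ i (a * b) - φ i (b * a)
            = ⟪M.lmul (star a) (ξ i) - M.rmul (op (star a)) (ξ i), M.lmul b (ξ i)⟫_ℂ
              + ⟪M.rmul (op (star a)) (ξ i), M.lmul b (ξ i) - M.rmul (op b) (ξ i)⟫_ℂ
              + ⟪ξ i, M.rmul (op (b * a)) (ξ i) - M.lmul (b * a) (ξ i)⟫_ℂ := by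
          rw [e1, hφ, inner_sub_left, inner_sub_right, inner_sub_right, e2]
          ring
        rw [e4]
        refine le_trans (norm_add₃_le) ?_
        have h1 : ‖(⟪M.lmul (star a) (ξ i) - M.rmul (op (star a)) (ξ i), M.lmul b (ξ i)⟫_ℂ : ℂ)‖
            ≤ ‖M.l (star a) (ξ i) - M.r (star a) (ξ i)‖ * ‖M.lmul b‖ := by
          refine le_trans (norm_inner_le_norm _ _) ?_
          have : ‖M.lmul b (ξ i)‖ ≤ ‖M.lmul b‖ := by
            simpa [hx1] using (M.lmul b).le_opNorm (ξ i)
          exact mul_le_mul_of_nonneg_left this (norm_nonneg _)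
        have h2 : ‖(⟪M.rmul (op (star a)) (ξ i), M.lmul b (ξ i) - M.rmul (op b) (ξ i)⟫_ℂ : ℂ)‖
            ≤ ‖M.rmul (op (star a))‖ * ‖M.l b (ξ i) - M.r b (ξ i)‖ := by
          refine le_trans (norm_inner_le_norm _ _) ?_
          have : ‖M.rmul (op (star a)) (ξ i)‖ ≤ ‖M.rmul (op (star a))‖ := by
            simpa [hx1] using (M.rmul (op (star a))).le_opNorm (ξ i)
          exact mul_le_mul_of_nonneg_right this (norm_nonneg _)
        have h3 : ‖(⟪ξ i, M.rmul (op (b * a)) (ξ i) - M.lmul (b * a) (ξ i)⟫_ℂ : ℂ)‖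
            ≤ ‖M.l (b * a) (ξ i) - M.r (b * a) (ξ i)‖ := by
          refine le_trans (norm_inner_le_norm _ _) ?_
          rw [hx1, one_mul]
          rw [show M.rmul (op (b * a)) (ξ i) - M.lmul (b * a) (ξ i)
              = -(M.l (b * a) (ξ i) - M.r (b * a) (ξ i)) from by simp [HBimod.l, HBimod.r]]
          rw [norm_neg]
        exact add_le_add (add_le_add h1 h2) h3
      have hsum : Tendsto (fun i => ‖M.l (star a) (ξ i) - M.r (star a) (ξ i)‖ * ‖M.lmul b‖
          + ‖M.rmul (op (star a))‖ * ‖M.l b (ξ i) - M.r b (ξ i)‖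
          + ‖M.l (b * a) (ξ i) - M.r (b * a) (ξ i)‖) atTop (nhds 0) := by
        have := (((hcent (star a)).mul_const ‖M.lmul b‖).add
          ((hcent b).const_mul ‖M.rmul (op (star a))‖)).add (hcent (b * a))
        simpa using this
      filter_upwards [hsum.eventually (eventually_le_nhds hε)] with i hi
      exact le_trans (hbound i) hi
    have h0 : ‖τw (a * b) - τw (b * a)‖ ≤ 0 :=
      le_of_forall_pos_le_add fun ε hε => by simpa using main ε hε
    exact sub_eq_zero.mp (norm_le_zero_iff.mp h0)
end
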